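/- arXiv:1912.13369 — 4 statements merged into one kernel-verified Lean document; each statement's English description precedes it below -/
import Mathlib

section
/- Let H be a complex Hilbert space, C a conjugation on H, and N a bounded linear operator. Then N is C-normal if and only if ‖N(Ch)‖ = ‖N*h‖ for all h ∈ H. -/
open ContinuousLinearMap
open scoped ComplexConjugate

/-- A conjugation on a complex Hilbert space: an antilinear isometric involution. -/
structure IsConjugation {H : Type*} [NormedAddCommGroup H] [InnerProductSpace ℂ H]
    (C : H → H) : Prop where
  map_add : ∀ x y : H, C (x + y) = C x + C y
  map_smul : ∀ (a : ℂ) (x : H), C (a • x) = (conj a) • C x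
  involutive : ∀ x : H, C (C x) = x
  inner_eq : ∀ x y : H, (inner ℂ (C x) (C y) : ℂ) = inner ℂ y x

/-- `N` is `C`-normal: `C N N* = N* N C`. -/
def CNormal {H : Type*} [NormedAddCommGroup H] [InnerProductSpace ℂ H] [CompleteSpace H]
    (C : H → H) (N : H →L[ℂ] H) : Prop :=
  ∀ x : H, C (N (adjoint N x)) = adjoint N (N (C x))

theorem stmt3 {H : Type*} [NormedAddCommGroup H] [InnerProductSpace ℂ H] [CompleteSpace H]
    (C : H → H) (hC : IsConjugation C) (N : H →L[ℂ] H) :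
    CNormal C N ↔ (∀ h : H, ‖N (C h)‖ = ‖adjoint N h‖) := by
  constructor
  · intro hN h
    have key : (inner ℂ (N (C h)) (N (C h)) : ℂ) = inner ℂ (adjoint N h) (adjoint N h) := by
      calc (inner ℂ (N (C h)) (N (C h)) : ℂ)
          = inner ℂ (C h) (adjoint N (N (C h))) := by
            rw [ContinuousLinearMap.adjoint_inner_right]
        _ = inner ℂ (C h) (C (N (adjoint N h))) := by rw [hN h]
        _ = inner ℂ (N (adjoint N h)) h := hC.inner_eq _ _
        _ = inner ℂ (adjoint N h) (adjoint N h) := by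
            rw [← ContinuousLinearMap.adjoint_inner_right]
    rw [inner_self_eq_norm_sq_to_K, inner_self_eq_norm_sq_to_K] at key
    have h2 : ‖N (C h)‖ ^ 2 = ‖adjoint N h‖ ^ 2 := by exact_mod_cast key
    nlinarith [norm_nonneg (N (C h)), norm_nonneg (adjoint N h)]
  · intro hnorm
    set T : H →ₗ[ℂ] H :=
      { toFun := fun h => C (adjoint N (N (C h))) - N (adjoint N h)
        map_add' := by
          intro x y
          simp [hC.map_add, map_add]
          abel
        map_smul' := by
          intro a x
          simp only [hC.map_smul, map_smul, RingHom.id_apply, smul_sub,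
            Complex.conj_conj]
        } with hT
    have hT0 : T = 0 := by
      rw [← inner_map_self_eq_zero]
      intro x
      have h1 : (inner ℂ (C (adjoint N (N (C x)))) x : ℂ) = inner ℂ (N (C x)) (N (C x)) := by
        calc (inner ℂ (C (adjoint N (N (C x)))) x : ℂ)
            = inner ℂ (C (adjoint N (N (C x)))) (C (C x)) := by rw [hC.involutive]
          _ = inner ℂ (C x) (adjoint N (N (C x))) := hC.inner_eq _ _
          _ = inner ℂ (N (C x)) (N (C x)) := by
              rw [ContinuousLinearMap.adjoint_inner_right]
      have h2 : (inner ℂ (N (adjoint N x)) x : ℂ) = inner ℂ (adjoint N x) (adjoint N x) := by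
        rw [← ContinuousLinearMap.adjoint_inner_right]
      have h3 : (inner ℂ (N (C x)) (N (C x)) : ℂ) = inner ℂ (adjoint N x) (adjoint N x) := by
        rw [inner_self_eq_norm_sq_to_K, inner_self_eq_norm_sq_to_K, hnorm x]
      show (inner ℂ (C (adjoint N (N (C x))) - N (adjoint N x)) x : ℂ) = 0
      rw [inner_sub_left, h1, h2, h3, sub_self]
    intro x
    have := LinearMap.ext_iff.mp hT0 x
    simp only [hT, LinearMap.coe_mk, AddHom.coe_mk, LinearMap.zero_apply] at this
    have heq : C (adjoint N (N (C x))) = N (adjoint N x) := by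
      have := sub_eq_zero.mp this
      exact this
    calc C (N (adjoint N x)) = C (C (adjoint N (N (C x)))) := by rw [heq]
      _ = adjoint N (N (C x)) := hC.involutive _
end

section
/- Let H be a complex Hilbert space, C a conjugation on H, and N a bounded linear operator. Then N is C-normal if and only if ‖N*(Ch)‖ = ‖Nh‖ for all h ∈ H. -/
open ContinuousLinearMap
open scoped ComplexConjugate

theorem stmt4 {H : Type*} [NormedAddCommGroup H] [InnerProductSpace ℂ H] [CompleteSpace H]
    (C : H → H) (hC : IsConjugation C) (N : H →L[ℂ] H) :
    CNormal C N ↔ (∀ h : H, ‖adjoint N (C h)‖ = ‖N h‖) := by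
  constructor
  · intro hN h
    have key : N (adjoint N (C h)) = C (adjoint N (N h)) := by
      have := hN (C h)
      rw [hC.involutive] at this
      calc N (adjoint N (C h)) = C (C (N (adjoint N (C h)))) := (hC.involutive _).symm
        _ = C (adjoint N (N h)) := by rw [this]
    have hinner : (inner ℂ (adjoint N (C h)) (adjoint N (C h)) : ℂ)
        = inner ℂ (N h) (N h) := by
      rw [adjoint_inner_left, key, hC.inner_eq, adjoint_inner_left]
    rw [@norm_eq_sqrt_re_inner ℂ, @norm_eq_sqrt_re_inner ℂ, hinner]
  · intro hnorm
    -- define the linear map T g = N (N* g) - C (N* (N (C g)))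
    set T : H →ₗ[ℂ] H :=
      { toFun := fun g => N (adjoint N g) - C (adjoint N (N (C g)))
        map_add' := by
          intro x y
          simp [hC.map_add, map_add]
          abel
        map_smul' := by
          intro a x
          simp [hC.map_smul, map_smul, smul_sub] } with hT
    have hTzero : T = 0 := by
      rw [← inner_map_self_eq_zero]
      intro g
      have hTg : T g = N (adjoint N g) - C (adjoint N (N (C g))) := rfl
      rw [hTg, inner_sub_left]
      have h1 : (inner ℂ (N (adjoint N g)) g : ℂ) = (‖adjoint N g‖ : ℂ) ^ 2 := by
        rw [← adjoint_inner_right, inner_self_eq_norm_sq_to_K]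
        norm_cast
      have h2 : (inner ℂ (C (adjoint N (N (C g)))) g : ℂ) = (‖N (C g)‖ : ℂ) ^ 2 := by
        calc (inner ℂ (C (adjoint N (N (C g)))) g : ℂ)
            = inner ℂ (C (adjoint N (N (C g)))) (C (C g)) := by rw [hC.involutive]
          _ = inner ℂ (C g) (adjoint N (N (C g))) := hC.inner_eq _ _
          _ = inner ℂ (N (C g)) (N (C g)) := by rw [adjoint_inner_right]
          _ = (‖N (C g)‖ : ℂ) ^ 2 := inner_self_eq_norm_sq_to_K _
      have h3 : ‖adjoint N g‖ = ‖N (C g)‖ := by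
        have := hnorm (C g)
        rwa [hC.involutive] at this
      rw [h1, h2, h3, sub_self]
    intro x
    have hx : T x = 0 := by rw [hTzero]; rfl
    have : N (adjoint N x) = C (adjoint N (N (C x))) := sub_eq_zero.mp hx
    rw [this, hC.involutive]
end

section
/- On C³ with conjugation C(z₁,z₂,z₃) = (conj z₃, conj z₂, conj z₁), the nilpotent operator N with matrix having 1 in the (1,2) entry and 0 elsewhere is not C-normal, yet both CNCN and NCNC are normal. Hence normality of N_L and N_R does not imply C-normality. -/
open ContinuousLinearMap
open scoped ComplexConjugate

/-- On `ℂ³` with the conjugation `C(z₁,z₂,z₃) = (conj z₃, conj z₂, conj z₁)`, the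
operator `N(z₁,z₂,z₃) = (z₂,0,0)` is not `C`-normal, yet `N_L = CNCN` and
`N_R = NCNC` are both normal. -/
theorem stmt8 (C : EuclideanSpace ℂ (Fin 3) → EuclideanSpace ℂ (Fin 3))
    (hCdef : ∀ (z : EuclideanSpace ℂ (Fin 3)) (i : Fin 3), C z i = conj (z (2 - i)))
    (N : EuclideanSpace ℂ (Fin 3) →L[ℂ] EuclideanSpace ℂ (Fin 3))
    (hNdef : ∀ (z : EuclideanSpace ℂ (Fin 3)) (i : Fin 3),
      N z i = if i = 0 then z 1 else 0) :
    ¬ (∀ x, C (N (adjoint N x)) = adjoint N (N (C x))) ∧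
    (∀ x, C (N (C (N (adjoint N (C (adjoint N (C x))))))) =
      adjoint N (C (adjoint N (C (C (N (C (N x)))))))) ∧
    (∀ x, N (C (N (C (C (adjoint N (C (adjoint N x))))))) =
      C (adjoint N (C (adjoint N (N (C (N (C x)))))))) := by
  have hadj : ∀ (z : EuclideanSpace ℂ (Fin 3)) (i : Fin 3),
      adjoint N z i = if i = 1 then z 0 else 0 := by
    intro z i
    have h1 : adjoint N z i =
        inner ℂ (EuclideanSpace.single i (1:ℂ)) (adjoint N z) := by
      rw [EuclideanSpace.inner_single_left]; simp
    rw [h1, ContinuousLinearMap.adjoint_inner_right]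
    rw [PiLp.inner_apply, Fin.sum_univ_three]
    simp only [hNdef]
    fin_cases i <;> simp [EuclideanSpace.single_apply]
  refine ⟨?_, ?_, ?_⟩
  · intro h
    have := congrArg (fun v : EuclideanSpace ℂ (Fin 3) => v 2) (h (EuclideanSpace.single 0 1))
    simp only [hCdef, hNdef, hadj] at this
    norm_num [EuclideanSpace.single_apply] at this
    rw [if_neg (by decide)] at this
    exact one_ne_zero this
  · intro x
    ext i
    fin_cases i <;> simp [hCdef, hNdef, hadj]
  · intro x
    ext i
    fin_cases i <;> simp [hCdef, hNdef, hadj]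
end

section
/- On L²[0,1] with conjugation (Cf)(t) = conj(f(1−t)), the multiplication operator M_φ by φ ∈ L^∞[0,1] is C-normal if and only if |φ(t)|² = |φ(1−t)|² for almost every t ∈ [0,1]. -/
open MeasureTheory ContinuousLinearMap
open scoped ComplexConjugate

private lemma key17 (z : ℂ) : conj z * z = ((‖z‖ ^ 2 : ℝ) : ℂ) := by
  rw [mul_comm, Complex.mul_conj]; norm_cast
  rw [Complex.sq_norm]

private theorem aux17 (μ : Measure ℝ) [IsFiniteMeasure μ]
    (mp : MeasurePreserving (fun t : ℝ => 1 - t) μ μ)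
    (C : Lp ℂ 2 μ → Lp ℂ 2 μ)
    (hC : ∀ f : Lp ℂ 2 μ, (C f : ℝ → ℂ) =ᵐ[μ] fun t => conj (f (1 - t)))
    (φ : ℝ → ℂ) (hφ : MemLp φ ⊤ μ)
    (M : Lp ℂ 2 μ →L[ℂ] Lp ℂ 2 μ)
    (hM : ∀ f : Lp ℂ 2 μ, (M f : ℝ → ℂ) =ᵐ[μ] fun t => φ t * f t) :
    (∀ f, C (M (adjoint M f)) = adjoint M (M (C f))) ↔
      (∀ᵐ t ∂μ, ‖φ t‖ ^ 2 = ‖φ (1 - t)‖ ^ 2) := by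
  have comp_ae : ∀ {u v : ℝ → ℂ}, u =ᵐ[μ] v →
      (fun t => u (1 - t)) =ᵐ[μ] (fun t => v (1 - t)) := by
    intro u v h
    exact mp.quasiMeasurePreserving.ae_eq_comp h
  -- the adjoint of M is multiplication by conj φ
  have hadj : ∀ f : Lp ℂ 2 μ, (adjoint M f : ℝ → ℂ) =ᵐ[μ] fun t => conj (φ t) * f t := by
    intro f
    have hcφ : MemLp (fun t => conj (φ t)) ⊤ μ :=
      LipschitzWith.comp_memLp (Complex.isometry_conj.lipschitz) (by simp) hφ
    have hmem : MemLp (fun t => conj (φ t) * (f : ℝ → ℂ) t) 2 μ := by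
      simpa [Pi.smul_apply, smul_eq_mul] using
        MemLp.mul' (p := ⊤) (r := 2) (Lp.memLp f) hcφ
    have heq : adjoint M f = hmem.toLp _ := by
      refine ext_inner_right ℂ fun v => ?_
      rw [adjoint_inner_left, L2.inner_def, L2.inner_def]
      refine integral_congr_ae ?_
      filter_upwards [hM v, hmem.coeFn_toLp] with t h1 h2
      simp only [RCLike.inner_apply, h1, h2, map_mul, Complex.conj_conj]
      ring
    rw [heq]
    exact hmem.coeFn_toLp
  -- a.e. description of the two sides
  have lhs : ∀ f : Lp ℂ 2 μ, (C (M (adjoint M f)) : ℝ → ℂ) =ᵐ[μ]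
      fun t => conj (φ (1 - t)) * φ (1 - t) * conj (f (1 - t)) := by
    intro f
    have h1 : (M (adjoint M f) : ℝ → ℂ) =ᵐ[μ]
        fun t => φ t * (conj (φ t) * f t) := by
      filter_upwards [hM (adjoint M f), hadj f] with t ha hb
      rw [ha, hb]
    refine (hC _).trans ?_
    filter_upwards [comp_ae h1] with t ht
    simp only [ht, map_mul, Complex.conj_conj]
    ring
  have rhs : ∀ f : Lp ℂ 2 μ, (adjoint M (M (C f)) : ℝ → ℂ) =ᵐ[μ]
      fun t => conj (φ t) * φ t * conj (f (1 - t)) := by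
    intro f
    refine (hadj (M (C f))).trans ?_
    filter_upwards [hM (C f), hC f] with t ha hb
    rw [ha, hb]; ring
  constructor
  · intro h
    set one : Lp ℂ 2 μ := (memLp_const (1 : ℂ)).toLp _ with hone_def
    have hone : (one : ℝ → ℂ) =ᵐ[μ] fun _ => (1 : ℂ) := MemLp.coeFn_toLp _
    have hfC : ((C one : Lp ℂ 2 μ) : ℝ → ℂ) =ᵐ[μ] fun _ => (1 : ℂ) := by
      refine (hC one).trans ?_
      filter_upwards [comp_ae hone] with t ht
      rw [ht]; simp
    have hmain := (lhs (C one)).symm.trans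
      ((Lp.ext_iff.mp (h (C one))).trans (rhs (C one)))
    filter_upwards [hmain, comp_ae hfC] with t h1 h2
    have h3 : conj (φ (1 - t)) * φ (1 - t) = conj (φ t) * φ t := by
      have h4 := h1
      rw [h2] at h4
      simpa using h4
    rw [key17, key17] at h3
    exact_mod_cast h3.symm
  · intro h f
    rw [Lp.ext_iff]
    refine (lhs f).trans (Filter.EventuallyEq.trans ?_ (rhs f).symm)
    filter_upwards [h] with t ht
    rw [key17, key17, ht]

/-- On `L²[0,1]` with the conjugation `(Cf)(t) = conj (f (1 - t))`, the multiplication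
operator `M_φ`, `φ ∈ L^∞`, is `C`-normal iff `|φ(t)|² = |φ(1-t)|²` a.e. -/
theorem stmt17
    (C : Lp ℂ 2 ((volume : Measure ℝ).restrict (Set.Icc 0 1)) →
         Lp ℂ 2 ((volume : Measure ℝ).restrict (Set.Icc 0 1)))
    (hC : ∀ f : Lp ℂ 2 ((volume : Measure ℝ).restrict (Set.Icc 0 1)),
      (C f : ℝ → ℂ) =ᵐ[(volume : Measure ℝ).restrict (Set.Icc 0 1)]
        fun t => conj (f (1 - t)))
    (φ : ℝ → ℂ) (hφ : MemLp φ ⊤ ((volume : Measure ℝ).restrict (Set.Icc 0 1)))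
    (M : Lp ℂ 2 ((volume : Measure ℝ).restrict (Set.Icc 0 1)) →L[ℂ]
         Lp ℂ 2 ((volume : Measure ℝ).restrict (Set.Icc 0 1)))
    (hM : ∀ f : Lp ℂ 2 ((volume : Measure ℝ).restrict (Set.Icc 0 1)),
      (M f : ℝ → ℂ) =ᵐ[(volume : Measure ℝ).restrict (Set.Icc 0 1)]
        fun t => φ t * f t) :
    (∀ f, C (M (adjoint M f)) = adjoint M (M (C f))) ↔
      (∀ᵐ t ∂(volume : Measure ℝ).restrict (Set.Icc 0 1),
        ‖φ t‖ ^ 2 = ‖φ (1 - t)‖ ^ 2) := by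
  have hpre : (fun t : ℝ => 1 - t) ⁻¹' (Set.Icc 0 1) = Set.Icc 0 1 := by
    ext t; simp only [Set.mem_preimage, Set.mem_Icc]
    constructor <;> intro ⟨a, b⟩ <;> constructor <;> linarith
  have mp : MeasurePreserving (fun t : ℝ => 1 - t)
      ((volume : Measure ℝ).restrict (Set.Icc 0 1))
      ((volume : Measure ℝ).restrict (Set.Icc 0 1)) := by
    have := (Measure.measurePreserving_sub_left (volume : Measure ℝ) 1).restrict_preimage
      (measurableSet_Icc : MeasurableSet (Set.Icc (0:ℝ) 1))
    rwa [hpre] at this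
  exact aux17 _ mp C hC φ hφ M hM
end
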